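/- Let (A_j)_{j=1}^N be measurable subsets of [0,1], let ℓ : {1,…,N} → {1,…,n} be nonincreasing (ℓ(j+1) ≤ ℓ(j)), and for each j let D_j and B_j ⊆ D_j be measurable sets such that: (a) for all i, j, if i ≤ j then either D_i ⊆ D_j or |D_i ∩ D_j| = 0; (b) |B_j| ≥ c₁ · ∑_{i : ℓ(i) ≥ ℓ(j), D_i ⊆ D_j} |A_i| for a fixed constant c₁ > 0. Then there exist pairwise disjoint measurable sets φ(1), …, φ(N) with φ(j) ⊆ B_j and |φ(j)| = c₁|A_j| for every j. -/

import Mathlib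

open Classical MeasureTheory Set Filter
open scoped ENNReal Topology

lemma exists_subset_volume_eq (S : Set ℝ) (hS : MeasurableSet S) (hfin : volume S ≠ ⊤)
    (r : ℝ≥0∞) (hr : r ≤ volume S) :
    ∃ T, T ⊆ S ∧ MeasurableSet T ∧ volume T = r := by
  rcases eq_or_lt_of_le hr with hreq | hrlt
  · exact ⟨S, subset_rfl, hS, hreq.symm⟩
  rcases eq_or_ne r 0 with hr0 | hr0
  · exact ⟨∅, empty_subset _, MeasurableSet.empty, by simp [hr0]⟩
  have hrne : r ≠ ⊤ := (hrlt.trans_le le_top).ne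
  set g : ℝ → ℝ := fun t => (volume (S ∩ Iic t)).toReal with hgdef
  have hfin' : ∀ t : ℝ, volume (S ∩ Iic t) ≠ ⊤ :=
    fun t => ((measure_mono inter_subset_left).trans_lt hfin.lt_top).ne
  have hmono : ∀ ⦃s t : ℝ⦄, s ≤ t → g s ≤ g t := by
    intro s t hst
    exact (ENNReal.toReal_le_toReal (hfin' s) (hfin' t)).mpr
      (measure_mono (inter_subset_inter_right _ (Iic_subset_Iic.mpr hst)))
  have hlip : ∀ s t : ℝ, s ≤ t → g t - g s ≤ t - s := by
    intro s t hst
    have h1 : volume (S ∩ Iic t) ≤ volume (S ∩ Iic s) + ENNReal.ofReal (t - s) := by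
      calc volume (S ∩ Iic t) ≤ volume ((S ∩ Iic s) ∪ Ioc s t) := by
            refine measure_mono ?_
            rintro x ⟨hxS, hxt⟩
            rcases le_or_gt x s with h | h
            · exact Or.inl ⟨hxS, h⟩
            · exact Or.inr ⟨h, hxt⟩
        _ ≤ volume (S ∩ Iic s) + volume (Ioc s t) := measure_union_le _ _
        _ = volume (S ∩ Iic s) + ENNReal.ofReal (t - s) := by rw [Real.volume_Ioc]
    have h2 := (ENNReal.toReal_le_toReal (hfin' t)
      (ENNReal.add_ne_top.mpr ⟨hfin' s, ENNReal.ofReal_ne_top⟩)).mpr h1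
    rw [ENNReal.toReal_add (hfin' s) ENNReal.ofReal_ne_top,
      ENNReal.toReal_ofReal (by linarith)] at h2
    simp only [hgdef]
    linarith
  have hcont : Continuous g := by
    have : LipschitzWith 1 g := by
      refine LipschitzWith.of_dist_le_mul ?_
      intro s t
      rw [Real.dist_eq, Real.dist_eq, NNReal.coe_one, one_mul]
      rcases le_total s t with h | h
      · rw [abs_sub_comm (g s), abs_of_nonneg (sub_nonneg.mpr (hmono h)),
          abs_sub_comm s, abs_of_nonneg (sub_nonneg.mpr h)]
        exact hlip s t h
      · rw [abs_of_nonneg (sub_nonneg.mpr (hmono h)), abs_of_nonneg (sub_nonneg.mpr h)]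
        exact hlip t s h
    exact this.continuous
  have htop : Tendsto (fun n : ℕ => volume (S ∩ Iic (n : ℝ))) atTop (𝓝 (volume S)) := by
    have hm : Monotone (fun n : ℕ => S ∩ Iic (n : ℝ)) := fun a b hab =>
      inter_subset_inter_right _ (Iic_subset_Iic.mpr (by exact_mod_cast hab))
    have h := tendsto_measure_iUnion_atTop (μ := volume) hm
    have hU : ⋃ n : ℕ, S ∩ Iic (n : ℝ) = S := by
      rw [← inter_iUnion]
      have : ⋃ n : ℕ, Iic ((n : ℝ)) = univ := by
        apply eq_univ_of_forall
        intro x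
        obtain ⟨n, hn⟩ := exists_nat_ge x
        exact mem_iUnion.mpr ⟨n, hn⟩
      rw [this, inter_univ]
    rw [hU] at h
    exact h
  have hbot : Tendsto (fun n : ℕ => volume (S ∩ Iic (-(n : ℝ)))) atTop (𝓝 0) := by
    have hm : Antitone (fun n : ℕ => S ∩ Iic (-(n : ℝ))) := fun a b hab =>
      inter_subset_inter_right _ (Iic_subset_Iic.mpr (neg_le_neg (by exact_mod_cast hab)))
    have h := tendsto_measure_iInter_atTop (μ := volume)
      (fun n => (hS.inter measurableSet_Iic).nullMeasurableSet) hm ⟨0, hfin' _⟩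
    have hI : ⋂ n : ℕ, S ∩ Iic (-(n : ℝ)) = ∅ := by
      apply eq_empty_iff_forall_notMem.mpr
      intro x hx
      obtain ⟨n, hn⟩ := exists_nat_gt (-x)
      have hx2 := (mem_iInter.mp hx n).2
      simp only [mem_Iic] at hx2
      linarith
    rw [hI, measure_empty] at h
    exact h
  have hr'pos : 0 < r.toReal := ENNReal.toReal_pos hr0 hrne
  have hr'lt : r.toReal < (volume S).toReal := (ENNReal.toReal_lt_toReal hrne hfin).mpr hrlt
  have htopR : Tendsto (fun n : ℕ => g (n : ℝ)) atTop (𝓝 (volume S).toReal) :=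
    (ENNReal.tendsto_toReal hfin).comp htop
  have hbotR : Tendsto (fun n : ℕ => g (-(n : ℝ))) atTop (𝓝 (0 : ℝ≥0∞).toReal) :=
    (ENNReal.tendsto_toReal (by simp)).comp hbot
  rw [ENNReal.toReal_zero] at hbotR
  obtain ⟨b, hb⟩ := (htopR.eventually (eventually_gt_nhds hr'lt)).exists
  obtain ⟨a, ha⟩ := (hbotR.eventually (eventually_lt_nhds hr'pos)).exists
  have hmem : r.toReal ∈ uIcc (g (-(a : ℝ))) (g (b : ℝ)) :=
    Icc_subset_uIcc ⟨ha.le, hb.le⟩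
  obtain ⟨t0, _, ht0⟩ := intermediate_value_uIcc (hcont.continuousOn
    (s := uIcc (-(a : ℝ)) (b : ℝ))) hmem
  refine ⟨S ∩ Iic t0, inter_subset_left, hS.inter measurableSet_Iic, ?_⟩
  exact (ENNReal.toReal_eq_toReal_iff' (hfin' t0) hrne).mp ht0

/-- Greedy selection lemma (Lemma 3.4): disjoint subsets `φ(j) ⊆ B_j` of
prescribed measures `c₁|A_j|` can be selected. -/
theorem stmt_14 (N : ℕ) (A B D : Fin N → Set ℝ)
    (hAmeas : ∀ j, MeasurableSet (A j)) (hBmeas : ∀ j, MeasurableSet (B j))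
    (hDmeas : ∀ j, MeasurableSet (D j))
    (hAsub : ∀ j, A j ⊆ Set.Icc (0:ℝ) 1) (hDsub : ∀ j, D j ⊆ Set.Icc (0:ℝ) 1)
    (hBD : ∀ j, B j ⊆ D j)
    (l : Fin N → ℕ) (hl : ∀ i j : Fin N, i ≤ j → l j ≤ l i)
    (hnest : ∀ i j : Fin N, i ≤ j → D i ⊆ D j ∨ volume (D i ∩ D j) = 0)
    (c₁ : ℝ) (hc₁ : 0 < c₁)
    (hlow : ∀ j : Fin N,
      ENNReal.ofReal c₁ *
          ∑ i ∈ Finset.univ.filter (fun i : Fin N => l j ≤ l i ∧ D i ⊆ D j),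
            volume (A i)
        ≤ volume (B j)) :
    ∃ φ : Fin N → Set ℝ,
      (∀ j, MeasurableSet (φ j)) ∧
      (∀ j, φ j ⊆ B j) ∧
      (∀ i j, i ≠ j → Disjoint (φ i) (φ j)) ∧
      (∀ j, volume (φ j) = ENNReal.ofReal c₁ * volume (A j)) := by
  -- auxiliary finiteness facts
  have hAfin : ∀ j, volume (A j) ≠ ⊤ := fun j =>
    ((measure_mono (hAsub j)).trans_lt (by simp [Real.volume_Icc])).ne
  have hBfin : ∀ j, volume (B j) ≠ ⊤ := fun j =>
    ((measure_mono ((hBD j).trans (hDsub j))).trans_lt (by simp [Real.volume_Icc])).ne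
  -- construct by strong recursion on a cutoff m
  have key : ∀ m : ℕ, ∃ φ : Fin N → Set ℝ,
      (∀ j, MeasurableSet (φ j)) ∧
      (∀ j, φ j ⊆ B j) ∧
      (∀ i j, i ≠ j → Disjoint (φ i) (φ j)) ∧
      (∀ j : Fin N, (j : ℕ) < m → volume (φ j) = ENNReal.ofReal c₁ * volume (A j)) ∧
      (∀ j : Fin N, m ≤ (j : ℕ) → φ j = ∅) := by
    intro m
    induction m with
    | zero =>
      exact ⟨fun _ => ∅, fun _ => MeasurableSet.empty, fun _ => empty_subset _,
        fun _ _ _ => disjoint_bot_left, fun j hj => absurd hj (Nat.not_lt_zero _),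
        fun _ _ => rfl⟩
    | succ m ih =>
      obtain ⟨φ, hφm, hφB, hφd, hφv, hφe⟩ := ih
      by_cases hmN : m < N
      · set j₀ : Fin N := ⟨m, hmN⟩ with hj₀
        set U : Set ℝ := ⋃ i, φ i with hU
        have hUmeas : MeasurableSet U := MeasurableSet.iUnion (fun i => hφm i)
        set F := Finset.univ.filter (fun i : Fin N => l j₀ ≤ l i ∧ D i ⊆ D j₀) with hF
        have hj₀F : j₀ ∈ F := by simp [hF]
        -- bound the measure stolen by earlier sets
        have hsteal : ∀ i : Fin N, volume (B j₀ ∩ φ i) ≤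
            (if i ∈ F.erase j₀ then ENNReal.ofReal c₁ * volume (A i) else 0) := by
          intro i
          rcases lt_or_ge (i : ℕ) m with him | him
          · have hij : i ≤ j₀ := le_of_lt (by exact him)
            rcases hnest i j₀ hij with hsub | hnull
            · have hiF : i ∈ F.erase j₀ := by
                refine Finset.mem_erase.mpr ⟨?_, ?_⟩
                · exact fun h => absurd (congrArg Fin.val h) (by simp [hj₀]; omega)
                · simp only [hF, Finset.mem_filter, Finset.mem_univ, true_and]
                  exact ⟨hl i j₀ hij, hsub⟩
              rw [if_pos hiF, ← hφv i him]
              exact measure_mono inter_subset_right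
            · have hsub2 : B j₀ ∩ φ i ⊆ D i ∩ D j₀ := fun x ⟨hx1, hx2⟩ =>
                ⟨hBD i (hφB i hx2), hBD j₀ hx1⟩
              have : volume (B j₀ ∩ φ i) = 0 :=
                measure_mono_null hsub2 hnull
              rw [this]
              exact zero_le
          · rw [hφe i him]
            simp
        have hsum : volume (B j₀ ∩ U) ≤
            ∑ i ∈ F.erase j₀, ENNReal.ofReal c₁ * volume (A i) := by
          calc volume (B j₀ ∩ U) = volume (⋃ i, B j₀ ∩ φ i) := by rw [hU, inter_iUnion]
            _ ≤ ∑ i : Fin N, volume (B j₀ ∩ φ i) := measure_iUnion_fintype_le _ _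
            _ ≤ ∑ i : Fin N, (if i ∈ F.erase j₀ then ENNReal.ofReal c₁ * volume (A i) else 0) :=
                Finset.sum_le_sum (fun i _ => hsteal i)
            _ = ∑ i ∈ F.erase j₀, ENNReal.ofReal c₁ * volume (A i) := by
                rw [Finset.sum_ite_mem, Finset.univ_inter]
        -- the available measure in B j₀ minus the union
        have hBUfin : volume (B j₀ ∩ U) ≠ ⊤ :=
          ((measure_mono inter_subset_left).trans_lt (hBfin j₀).lt_top).ne
        have havail : ENNReal.ofReal c₁ * volume (A j₀) ≤ volume (B j₀ \ U) := by
          have hkey : ENNReal.ofReal c₁ * volume (A j₀) + volume (B j₀ ∩ U) ≤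
              volume (B j₀) := by
            calc ENNReal.ofReal c₁ * volume (A j₀) + volume (B j₀ ∩ U)
                ≤ ENNReal.ofReal c₁ * volume (A j₀) +
                  ∑ i ∈ F.erase j₀, ENNReal.ofReal c₁ * volume (A i) :=
                  add_le_add le_rfl hsum
              _ = ∑ i ∈ F, ENNReal.ofReal c₁ * volume (A i) :=
                  Finset.add_sum_erase F (fun i => ENNReal.ofReal c₁ * volume (A i)) hj₀F
              _ = ENNReal.ofReal c₁ * ∑ i ∈ F, volume (A i) := (Finset.mul_sum _ _ _).symm
              _ ≤ volume (B j₀) := hlow j₀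
          have hsplit : volume (B j₀ ∩ U) + volume (B j₀ \ U) = volume (B j₀) :=
            measure_inter_add_diff _ hUmeas
          rw [← hsplit] at hkey
          rw [add_comm] at hkey
          exact (ENNReal.add_le_add_iff_left hBUfin).mp hkey
        -- choose the new piece
        have hSmeas : MeasurableSet (B j₀ \ U) := (hBmeas j₀).diff hUmeas
        have hSfin : volume (B j₀ \ U) ≠ ⊤ :=
          ((measure_mono diff_subset).trans_lt (hBfin j₀).lt_top).ne
        obtain ⟨T, hTsub, hTmeas, hTvol⟩ :=
          exists_subset_volume_eq (B j₀ \ U) hSmeas hSfin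
            (ENNReal.ofReal c₁ * volume (A j₀)) havail
        refine ⟨Function.update φ j₀ T, ?_, ?_, ?_, ?_, ?_⟩
        · intro j
          rcases eq_or_ne j j₀ with rfl | hne
          · simpa using hTmeas
          · simpa [Function.update_of_ne hne] using hφm j
        · intro j
          rcases eq_or_ne j j₀ with rfl | hne
          · simpa using hTsub.trans diff_subset
          · simpa [Function.update_of_ne hne] using hφB j
        · intro i j hij
          have hTdisj : ∀ k : Fin N, Disjoint T (φ k) := by
            intro k
            refine Set.disjoint_left.mpr (fun x hxT hxφ => ?_)
            exact (hTsub hxT).2 (mem_iUnion.mpr ⟨k, hxφ⟩)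
          rcases eq_or_ne i j₀ with rfl | hi
          · rw [Function.update_self, Function.update_of_ne (Ne.symm hij)]
            exact hTdisj j
          · rw [Function.update_of_ne hi]
            rcases eq_or_ne j j₀ with rfl | hj
            · rw [Function.update_self]
              exact (hTdisj i).symm
            · rw [Function.update_of_ne hj]
              exact hφd i j hij
        · intro j hj
          rcases eq_or_ne j j₀ with rfl | hne
          · simpa using hTvol
          · have hjm : (j : ℕ) < m := by
              rcases Nat.lt_succ_iff_lt_or_eq.mp hj with h | h
              · exact h
              · exact absurd (Fin.ext h : j = j₀) hne
            rw [Function.update_of_ne hne]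
            exact hφv j hjm
        · intro j hj
          have hne : j ≠ j₀ := fun h => by
            rw [h] at hj; simp only [hj₀] at hj; omega
          rw [Function.update_of_ne hne]
          exact hφe j (by omega)
      · -- m ≥ N : nothing changes
        refine ⟨φ, hφm, hφB, hφd, ?_, ?_⟩
        · intro j hj
          exact hφv j (lt_of_lt_of_le j.isLt (le_of_not_gt hmN))
        · intro j hj
          exact hφe j (le_trans (Nat.le_succ m) hj)
  obtain ⟨φ, h1, h2, h3, h4, _⟩ := key N
  exact ⟨φ, h1, h2, h3, fun j => h4 j j.isLt⟩
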